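/- Let β > 0 and λ = 1/2 − √(1/4 + 2β). If z : [1,∞) → ℝ is continuous, nonnegative, twice differentiable on (1,∞), satisfies (1/2)·z''(t) − (1/2)·z'(t) − β·z(t)·(z(t)+1) = 0 for all t > 1, and z(t) → 0 as t → ∞, then z(t) ≤ z(1)·exp(λ·(t−1)) for all t ≥ 1; in particular z decreases to zero exponentially fast. -/

import Mathlib

open Real Filter

/-- Comparison of the nonlinear ODE `(1/2)z'' - (1/2)z' - βz(z+1) = 0` against the
linear one: exponential decay `z(t) ≤ z(1) exp(λ (t-1))`. -/
theorem stmt3 (β lam : ℝ) (hβ : 0 < β)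
    (hlam : lam = 1 / 2 - Real.sqrt (1 / 4 + 2 * β))
    (z : ℝ → ℝ) (hcont : ContinuousOn z (Set.Ici 1))
    (hnonneg : ∀ t ≥ (1 : ℝ), 0 ≤ z t)
    (hdiff : ∀ t > (1 : ℝ), DifferentiableAt ℝ z t)
    (hdiff' : ∀ t > (1 : ℝ), DifferentiableAt ℝ (deriv z) t)
    (heq : ∀ t > (1 : ℝ),
      (1 / 2) * deriv (deriv z) t - (1 / 2) * deriv z t - β * z t * (z t + 1) = 0)
    (hlim : Tendsto z atTop (nhds 0)) :
    ∀ t ≥ (1 : ℝ), z t ≤ z 1 * Real.exp (lam * (t - 1)) := by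
  -- basic facts about lam
  have hs2 : Real.sqrt (1 / 4 + 2 * β) ^ 2 = 1 / 4 + 2 * β := by
    rw [Real.sq_sqrt]; nlinarith
  have hshalf : (1 / 2 : ℝ) < Real.sqrt (1 / 4 + 2 * β) := by
    nlinarith [Real.sqrt_nonneg (1 / 4 + 2 * β)]
  have hlamneg : lam < 0 := by rw [hlam]; linarith
  have hlamne : lam ≠ 0 := ne_of_lt hlamneg
  have hkey : lam ^ 2 - lam = 2 * β := by rw [hlam]; nlinarith
  set P : ℝ → ℝ := fun t => deriv z t - lam * z t with hP
  -- derivative of Q := exp(-(1-lam) t) * P t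
  set Q : ℝ → ℝ := fun t => Real.exp (-(1 - lam) * t) * P t with hQ
  have hQd : ∀ t > (1 : ℝ), HasDerivAt Q (Real.exp (-(1 - lam) * t) * (2 * β * (z t) ^ 2)) t := by
    intro t ht
    have hz := (hdiff t ht).hasDerivAt
    have hz' := (hdiff' t ht).hasDerivAt
    have hPd : HasDerivAt P (deriv (deriv z) t - lam * deriv z t) t :=
      hz'.sub (hz.const_mul lam)
    have hEd : HasDerivAt (fun t => Real.exp (-(1 - lam) * t))
        (Real.exp (-(1 - lam) * t) * (-(1 - lam))) t := by
      have h1 : HasDerivAt (fun t : ℝ => -(1 - lam) * t) (-(1 - lam)) t := by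
        simpa using (hasDerivAt_id t).const_mul (-(1 - lam))
      exact h1.exp
    have := hEd.mul hPd
    have hode : deriv (deriv z) t = deriv z t + 2 * β * z t * (z t + 1) := by
      have := heq t ht; linarith
    refine this.congr_deriv ?_
    simp only [hP]
    rw [hode]
    linear_combination (-1 : ℝ) * (Real.exp (-(1 - lam) * t) * z t) * hkey
  -- Claim: P ≤ 0 on (1,∞)
  have hPnonpos : ∀ t > (1 : ℝ), P t ≤ 0 := by
    by_contra hcon
    push_neg at hcon
    obtain ⟨t1, ht1, hc0⟩ := hcon
    set c : ℝ := P t1 with hcdef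
    clear_value c
    have hc : 0 < c := hc0
    -- Q monotone on Ici t1
    have hQmono : MonotoneOn Q (Set.Ici t1) := by
      apply monotoneOn_of_deriv_nonneg (convex_Ici t1)
      · intro x hx
        exact ((hQd x (lt_of_lt_of_le ht1 hx)).differentiableAt.continuousAt).continuousWithinAt
      · intro x hx
        rw [interior_Ici] at hx
        exact (hQd x (ht1.trans hx)).differentiableAt.differentiableWithinAt
      · intro x hx
        rw [interior_Ici] at hx
        rw [(hQd x (ht1.trans hx)).deriv]
        positivity
    -- hence P t ≥ c for all t ≥ t1
    have hPge : ∀ t ≥ t1, c ≤ P t := by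
      intro t ht
      have h1 : Q t1 ≤ Q t := hQmono (Set.self_mem_Ici) ht ht
      simp only [hQ] at h1
      rw [← hcdef] at h1
      have he1 : Real.exp (-(1 - lam) * t) ≤ Real.exp (-(1 - lam) * t1) := by
        apply Real.exp_le_exp.mpr; nlinarith
      have hE1 := Real.exp_pos (-(1 - lam) * t1)
      have hEt := Real.exp_pos (-(1 - lam) * t)
      have hPt : 0 < P t := by nlinarith
      have h2 : Real.exp (-(1 - lam) * t) * P t ≤ Real.exp (-(1 - lam) * t1) * P t :=
        mul_le_mul_of_nonneg_right he1 hPt.le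
      have h3 : Real.exp (-(1 - lam) * t1) * c ≤ Real.exp (-(1 - lam) * t1) * P t :=
        le_trans h1 h2
      exact le_of_mul_le_mul_left h3 hE1
    -- from z → 0, eventually lam * z t ≥ -c/2
    have hεpos : 0 < c / (2 * (-lam)) := by
      apply div_pos hc; linarith
    obtain ⟨N1, hN1⟩ := (Metric.tendsto_atTop.mp hlim) (c / (2 * (-lam))) hεpos
    set T : ℝ := max t1 N1 with hT
    have hTt1 : t1 ≤ T := le_max_left _ _
    have hT1 : (1 : ℝ) < T := lt_of_lt_of_le ht1 hTt1
    have hzder : ∀ t ≥ T, c / 2 ≤ deriv z t := by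
      intro t ht
      have h1 : c ≤ P t := hPge t (le_trans hTt1 ht)
      have h2 : dist (z t) 0 < c / (2 * (-lam)) := hN1 t (le_trans (le_max_right _ _) ht)
      rw [Real.dist_eq, sub_zero] at h2
      have h3 : z t < c / (2 * (-lam)) := lt_of_le_of_lt (le_abs_self _) h2
      have h4 : 0 ≤ z t := hnonneg t (le_of_lt (lt_of_lt_of_le hT1 ht))
      have hnl : (-lam) ≠ 0 := by intro h; apply hlamne; linarith
      have h5 : lam * z t ≥ -(c / 2) := by
        rw [ge_iff_le, neg_le]
        calc -(lam * z t) = (-lam) * z t := by ring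
          _ ≤ (-lam) * (c / (2 * (-lam))) := by
              apply mul_le_mul_of_nonneg_left (le_of_lt h3); linarith
          _ = c / 2 := by field_simp
      simp only [hP] at h1
      linarith
    -- z grows linearly beyond T : contradiction with z → 0
    have hgmono : MonotoneOn (fun t => z t - (c / 2) * t) (Set.Ici T) := by
      apply monotoneOn_of_deriv_nonneg (convex_Ici T)
      · intro x hx
        exact (((hdiff x (lt_of_lt_of_le hT1 hx)).sub
          ((differentiable_id.const_mul (c/2)) x)).continuousAt).continuousWithinAt
      · intro x hx
        rw [interior_Ici] at hx
        exact ((hdiff x (hT1.trans hx)).sub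
          ((differentiable_id.const_mul (c/2)) x)).differentiableWithinAt
      · intro x hx
        rw [interior_Ici] at hx
        have hd : HasDerivAt (fun t => z t - (c / 2) * t) (deriv z x - c / 2) x := by
          have := ((hdiff x (hT1.trans hx)).hasDerivAt).sub
            ((hasDerivAt_id x).const_mul (c/2))
          exact this.congr_deriv (by simp)
        rw [hd.deriv]
        have := hzder x (le_of_lt hx)
        linarith
    obtain ⟨N2, hN2⟩ := (Metric.tendsto_atTop.mp hlim) 1 one_pos
    set t2 : ℝ := max N2 (T + 4 / c) with ht2
    have h10 : T + 4 / c ≤ t2 := le_max_right _ _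
    have ht2T : T ≤ t2 := by
      have h4c : 0 < 4 / c := by positivity
      linarith
    have h6 : z T - (c / 2) * T ≤ z t2 - (c / 2) * t2 :=
      hgmono Set.self_mem_Ici ht2T ht2T
    have h7 : dist (z t2) 0 < 1 := hN2 t2 (le_max_left _ _)
    rw [Real.dist_eq, sub_zero] at h7
    have h8 : z t2 < 1 := lt_of_le_of_lt (le_abs_self _) h7
    have h9 : 0 ≤ z T := hnonneg T (le_of_lt hT1)
    have hcne : c ≠ 0 := ne_of_gt hc
    have hcc : (c / 2) * (4 / c) = 2 := by field_simp; ring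
    have h11 : (c / 2) * (4 / c) ≤ (c / 2) * (t2 - T) := by
      apply mul_le_mul_of_nonneg_left _ (by linarith)
      have h4c : 0 < 4 / c := by positivity
      linarith
    have h12 : (2 : ℝ) ≤ z t2 := by nlinarith
    linarith
  -- Now r := exp(-lam t) * z t is antitone on [1,∞)
  have hrmono : AntitoneOn (fun t => Real.exp (-lam * t) * z t) (Set.Ici 1) := by
    apply antitoneOn_of_deriv_nonpos (convex_Ici 1)
    · exact (((Real.continuous_exp.comp (continuous_const.mul continuous_id)).continuousOn)).mul hcont
    · intro x hx
      rw [interior_Ici] at hx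
      have hEd : HasDerivAt (fun t => Real.exp (-lam * t)) (Real.exp (-lam * x) * (-lam)) x := by
        have h1 : HasDerivAt (fun t : ℝ => -lam * t) (-lam) x := by
          simpa using (hasDerivAt_id x).const_mul (-lam)
        exact h1.exp
      exact (hEd.mul (hdiff x hx).hasDerivAt).differentiableAt.differentiableWithinAt
    · intro x hx
      rw [interior_Ici] at hx
      have hEd : HasDerivAt (fun t => Real.exp (-lam * t)) (Real.exp (-lam * x) * (-lam)) x := by
        have h1 : HasDerivAt (fun t : ℝ => -lam * t) (-lam) x := by
          simpa using (hasDerivAt_id x).const_mul (-lam)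
        exact h1.exp
      rw [show (fun t => Real.exp (-lam * t) * z t) = ((fun t => Real.exp (-lam * t)) * z) from rfl,
        (hEd.mul (hdiff x hx).hasDerivAt).deriv]
      have hp := hPnonpos x hx
      simp only [hP] at hp
      have hep := Real.exp_pos (-lam * x)
      nlinarith
  intro t ht
  have h1 : Real.exp (-lam * t) * z t ≤ Real.exp (-lam * 1) * z 1 :=
    hrmono Set.self_mem_Ici ht ht
  have he1 : Real.exp (lam * (t - 1)) = Real.exp (lam * t) * Real.exp (-lam * 1) := by
    rw [← Real.exp_add]; ring_nf
  have he2 : Real.exp (lam * t) * Real.exp (-lam * t) = 1 := by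
    rw [← Real.exp_add]; ring_nf; exact Real.exp_zero
  have hep1 := Real.exp_pos (lam * t)
  calc z t = Real.exp (lam * t) * (Real.exp (-lam * t) * z t) := by
        rw [← mul_assoc, he2, one_mul]
    _ ≤ Real.exp (lam * t) * (Real.exp (-lam * 1) * z 1) := by
        apply mul_le_mul_of_nonneg_left h1 (le_of_lt hep1)
    _ = z 1 * Real.exp (lam * (t - 1)) := by rw [he1]; ring
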